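/- Let H be a separable Hilbert space, K a compact self-adjoint operator on H, λ an eigenvalue of K with eigenspace of finite dimension N_λ and orthonormal basis φ₁,…,φ_{N_λ}, and ξ₁,…,ξ_N ∈ H. If L_{ξ₁} + ⋯ + L_{ξ_N} = H, then the N_λ × N matrix A_λ = (⟨φ_j, ξ_k⟩) has rank N_λ. -/

import Mathlib

set_option synthInstance.maxHeartbeats 1000000
set_option maxHeartbeats 1000000

open scoped RealInnerProductSpace

/-- The cyclic subspace `L_ξ` generated by `ξ`: the closure of the span of `{Kⁿ ξ}`. -/
noncomputable def cyclicSubspace {H : Type*} [NormedAddCommGroup H] [InnerProductSpace ℝ H]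
    (K : H →L[ℝ] H) (ξ : H) : Submodule ℝ H :=
  (Submodule.span ℝ (Set.range fun n : ℕ => (K ^ n) ξ)).topologicalClosure

/-- `K` compact self-adjoint, `λ` an eigenvalue with eigenspace of finite
dimension `N_λ` and orthonormal basis `φ₁,…,φ_{N_λ}`, `ξ₁,…,ξ_N ∈ H`.
If `L_{ξ₁} + ⋯ + L_{ξ_N} = H`, then the matrix `(⟨φ_j, ξ_k⟩)` has rank `N_λ`. -/
theorem stmt2 {H : Type*} [NormedAddCommGroup H] [InnerProductSpace ℝ H] [CompleteSpace H]
    [TopologicalSpace.SeparableSpace H]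
    (K : H →L[ℝ] H) (hcpt : IsCompactOperator K) (hsa : IsSelfAdjoint K)
    (lam : ℝ) (hlam : Module.End.HasEigenvalue (K : H →ₗ[ℝ] H) lam)
    (Nlam : ℕ) (φ : Fin Nlam → H)
    (hφON : Orthonormal ℝ φ)
    (hφspan : Submodule.span ℝ (Set.range φ) = Module.End.eigenspace (K : H →ₗ[ℝ] H) lam)
    (N : ℕ) (ξ : Fin N → H)
    (hfull : (⨆ k : Fin N, cyclicSubspace K (ξ k)) = ⊤) :
    (Matrix.of fun (j : Fin Nlam) (k : Fin N) => ⟪φ j, ξ k⟫).rank = Nlam := by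
  have hsym : (K : H →ₗ[ℝ] H).IsSymmetric :=
    (ContinuousLinearMap.isSelfAdjoint_iff_isSymmetric.mp hsa)
  have hli : LinearIndependent ℝ (Matrix.of fun (j : Fin Nlam) (k : Fin N) => ⟪φ j, ξ k⟫).row := by
    rw [Fintype.linearIndependent_iff]
    intro c hc j
    set v : H := ∑ i, c i • φ i with hv
    -- v is in the eigenspace
    have hvE : v ∈ Module.End.eigenspace (K : H →ₗ[ℝ] H) lam := by
      rw [← hφspan]
      exact Submodule.sum_mem _ fun i _ =>
        Submodule.smul_mem _ _ (Submodule.subset_span (Set.mem_range_self i))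
    have hKv : K v = lam • v := by
      have := hvE
      rw [Module.End.mem_eigenspace_iff] at this
      simpa using this
    -- v is orthogonal to each ξ k
    have hvξ : ∀ k : Fin N, ⟪v, ξ k⟫ = 0 := by
      intro k
      have := congrFun hc k
      simpa [hv, sum_inner, real_inner_smul_left] using this
    -- v is orthogonal to each Kⁿ (ξ k)
    have hvKn : ∀ (k : Fin N) (n : ℕ), ⟪v, (K ^ n) (ξ k)⟫ = 0 := by
      intro k n
      induction n with
      | zero => simpa using hvξ k
      | succ n ih =>
          have : (K ^ (n + 1)) (ξ k) = K ((K ^ n) (ξ k)) := by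
            rw [pow_succ']; rfl
          rw [this]
          calc ⟪v, K ((K ^ n) (ξ k))⟫ = ⟪K v, (K ^ n) (ξ k)⟫ := (hsym v _).symm
              _ = lam * ⟪v, (K ^ n) (ξ k)⟫ := by rw [hKv, real_inner_smul_left]
              _ = 0 := by rw [ih, mul_zero]
    -- v is orthogonal to each cyclic subspace
    have hvcyc : ∀ k : Fin N, v ∈ (cyclicSubspace K (ξ k))ᗮ := by
      intro k
      have hvsp : v ∈ (Submodule.span ℝ (Set.range fun n : ℕ => (K ^ n) (ξ k)))ᗮ := by
        rw [Submodule.mem_orthogonal]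
        intro u hu
        induction hu using Submodule.span_induction with
        | mem x hx =>
            obtain ⟨n, rfl⟩ := hx
            rw [real_inner_comm]
            exact hvKn k n
        | zero => simp
        | add x y _ _ hx hy => rw [inner_add_left, hx, hy, add_zero]
        | smul a x _ hx => rw [inner_smul_left, hx, mul_zero]
      rw [cyclicSubspace, ← Submodule.orthogonal_orthogonal_eq_closure,
        Submodule.orthogonal_orthogonal]
      exact hvsp
    have hv0 : v = 0 := by
      have : v ∈ (⨆ k : Fin N, cyclicSubspace K (ξ k))ᗮ := by
        rw [← Submodule.iInf_orthogonal, Submodule.mem_iInf]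
        exact hvcyc
      rw [hfull, Submodule.top_orthogonal_eq_bot] at this
      exact this
    have := hφON.inner_right_fintype c j
    rw [← hv, hv0, inner_zero_right] at this
    exact this.symm
  rw [hli.rank_matrix, Fintype.card_fin]
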